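/- Let X⁽ᵛ⁾ be an n×p_v real matrix for v = 1, …, m, let X = [X⁽¹⁾, …, X⁽ᵐ⁾] be the n×p column-concatenated matrix with p = p₁ + ⋯ + p_m, and let X = U D Vᵀ be a singular value decomposition, where U is an n×n orthogonal matrix, V is a p×p orthogonal matrix, and D is an n×p matrix that is zero off the main diagonal with nonnegative diagonal entries σ₁ ≥ σ₂ ≥ ⋯ (singular values in decreasing order). For k ≤ min(n,p), let Uₖ be the n×k matrix of the first k columns of U and V_{1:k}⁽ᵛ⁾ the p_v×k block of V_{1:k} (the p×k matrix of the first k columns of V) consisting of the rows indexed p₁+⋯+p_{v−1}+1 through p₁+⋯+p_v. Let K⁽ᵛ⁾ = X⁽ᵛ⁾(X⁽ᵛ⁾)ᵀ, let Q be a k×k orthogonal matrix, and set H = UₖQ. Then tr(K⁽ᵛ⁾ − HᵀK⁽ᵛ⁾H) = tr(X⁽ᵛ⁾(X⁽ᵛ⁾)ᵀ) − ( tr((V_{1:k}⁽ᵛ⁾)ᵀ (X⁽ᵛ⁾)ᵀ X⁽ᵛ⁾ V_{1:k}⁽ᵛ⁾) + ∑_{w≠v} tr((V_{1:k}⁽ᵛ⁾)ᵀ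 (X⁽ᵛ⁾)ᵀ X⁽ʷ⁾ V_{1:k}⁽ʷ⁾) ). -/
import Mathlib


open Matrix

/-- Proposition S3 of the paper: with `K⁽ᵛ⁾ = X⁽ᵛ⁾ (X⁽ᵛ⁾)ᵀ` and `H = Uₖ * Q`
for an orthogonal `Q`, the within-cluster variance satisfies
`tr(K⁽ᵛ⁾) − tr(Hᵀ K⁽ᵛ⁾ H) = tr(X⁽ᵛ⁾ (X⁽ᵛ⁾)ᵀ) −
  (tr((V_{1:k}⁽ᵛ⁾)ᵀ (X⁽ᵛ⁾)ᵀ X⁽ᵛ⁾ V_{1:k}⁽ᵛ⁾)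
   + ∑_{w ≠ v} tr((V_{1:k}⁽ᵛ⁾)ᵀ (X⁽ᵛ⁾)ᵀ X⁽ʷ⁾ V_{1:k}⁽ʷ⁾))`. -/
theorem unexplained_variability_decomposition {n m k : ℕ} (p : Fin m → ℕ)
    (hk1 : k ≤ n) (hk2 : k ≤ ∑ v, p v)
    (Xv : ∀ v : Fin m, Matrix (Fin n) (Fin (p v)) ℝ)
    (X : Matrix (Fin n) ((v : Fin m) × Fin (p v)) ℝ)
    (hX : ∀ i q, X i q = Xv q.1 i q.2)
    (U : Matrix (Fin n) (Fin n) ℝ)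
    (V : Matrix ((v : Fin m) × Fin (p v)) (Fin (∑ v, p v)) ℝ)
    (D : Matrix (Fin n) (Fin (∑ v, p v)) ℝ)
    (σ : ℕ → ℝ)
    (hU : Uᵀ * U = 1) (hU' : U * Uᵀ = 1)
    (hV : Vᵀ * V = 1) (hV' : V * Vᵀ = 1)
    (hD : ∀ i j, D i j = if (i : ℕ) = (j : ℕ) then σ (i : ℕ) else 0)
    (hσ : Antitone σ) (hσ0 : ∀ i, 0 ≤ σ i)
    (hsvd : X = U * D * Vᵀ)
    (Q : Matrix (Fin k) (Fin k) ℝ) (hQ : Qᵀ * Q = 1) (hQ' : Q * Qᵀ = 1)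
    (H : Matrix (Fin n) (Fin k) ℝ)
    (hH : H = U.submatrix id (Fin.castLE hk1) * Q)
    (Vb : ∀ v : Fin m, Matrix (Fin (p v)) (Fin k) ℝ)
    (hVb : ∀ v, Vb v =
      V.submatrix (fun r : Fin (p v) => (⟨v, r⟩ : (w : Fin m) × Fin (p w)))
        (Fin.castLE hk2)) :
    ∀ v : Fin m,
      (Xv v * (Xv v)ᵀ).trace - (Hᵀ * (Xv v * (Xv v)ᵀ) * H).trace =
        (Xv v * (Xv v)ᵀ).trace -
          (((Vb v)ᵀ * (Xv v)ᵀ * Xv v * Vb v).trace +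
            ∑ w ∈ Finset.univ.erase v, ((Vb v)ᵀ * (Xv v)ᵀ * Xv w * Vb w).trace) := by
  intro v
  set Uk : Matrix (Fin n) (Fin k) ℝ := U.submatrix id (Fin.castLE hk1) with hUk
  set Sk : Matrix (Fin k) (Fin k) ℝ := Matrix.diagonal (fun a : Fin k => σ a) with hSk
  -- delta lemmas
  have hδU : ∀ a b : Fin n, (∑ j, U j a * U j b) = if a = b then (1:ℝ) else 0 := by
    intro a b
    have := congrFun (congrFun hU a) b
    simpa [Matrix.mul_apply, Matrix.one_apply] using this
  have hδV : ∀ a b : Fin (∑ v, p v), (∑ s, V s a * V s b) = if a = b then (1:ℝ) else 0 := by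
    intro a b
    have := congrFun (congrFun hV a) b
    simpa [Matrix.mul_apply, Matrix.one_apply] using this
  have hXe : ∀ j s, X j s = ∑ c, (∑ r, U j r * D r c) * V s c := by
    intro j s
    rw [hsvd]
    simp [Matrix.mul_apply]
  -- key 1 : Ukᵀ X = Σ Vₖᵀ, entrywise
  have key1 : ∀ (a : Fin k) (s : (w : Fin m) × Fin (p w)),
      (∑ j, U j (Fin.castLE hk1 a) * X j s) = σ a * V s (Fin.castLE hk2 a) := by
    intro a s
    calc (∑ j, U j (Fin.castLE hk1 a) * X j s)
        = ∑ j, ∑ c, ∑ r, (U j (Fin.castLE hk1 a) * U j r) * (D r c * V s c) := by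
          refine Finset.sum_congr rfl fun j _ => ?_
          rw [hXe, Finset.mul_sum]
          refine Finset.sum_congr rfl fun c _ => ?_
          rw [Finset.sum_mul, Finset.mul_sum]
          exact Finset.sum_congr rfl fun r _ => by ring
      _ = ∑ c, ∑ r, (∑ j, U j (Fin.castLE hk1 a) * U j r) * (D r c * V s c) := by
          rw [Finset.sum_comm]
          refine Finset.sum_congr rfl fun c _ => ?_
          rw [Finset.sum_comm]
          refine Finset.sum_congr rfl fun r _ => ?_
          rw [Finset.sum_mul]
      _ = ∑ c, D (Fin.castLE hk1 a) c * V s c := by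
          refine Finset.sum_congr rfl fun c _ => ?_
          simp_rw [hδU]
          simp [Finset.sum_ite_eq]
      _ = σ a * V s (Fin.castLE hk2 a) := by
          rw [Finset.sum_eq_single (Fin.castLE hk2 a)]
          · simp [hD]
          · intro c _ hc
            rw [hD]
            have hne : ¬ ((a : ℕ) = (c : ℕ)) := by
              intro h
              exact hc (by apply Fin.ext; simp [← h])
            simp [hne]
          · intro h; exact absurd (Finset.mem_univ _) h
  -- key 2 : X Vₖ = Uk Σ, entrywise
  have key2 : ∀ (i : Fin n) (a : Fin k),
      (∑ s, X i s * V s (Fin.castLE hk2 a)) = σ a * U i (Fin.castLE hk1 a) := by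
    intro i a
    calc (∑ s, X i s * V s (Fin.castLE hk2 a))
        = ∑ s, ∑ c, ∑ r, (U i r * D r c) * (V s c * V s (Fin.castLE hk2 a)) := by
          refine Finset.sum_congr rfl fun s _ => ?_
          rw [hXe]
          simp only [Finset.sum_mul]
          refine Finset.sum_congr rfl fun c _ => Finset.sum_congr rfl fun r _ => by ring
      _ = ∑ c, ∑ r, (U i r * D r c) * (∑ s, V s c * V s (Fin.castLE hk2 a)) := by
          rw [Finset.sum_comm]
          refine Finset.sum_congr rfl fun c _ => ?_
          rw [Finset.sum_comm]
          refine Finset.sum_congr rfl fun r _ => ?_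
          rw [Finset.mul_sum]
      _ = ∑ r, U i r * D r (Fin.castLE hk2 a) := by
          simp_rw [hδV]
          rw [Finset.sum_comm]
          refine Finset.sum_congr rfl fun r _ => ?_
          simp [Finset.sum_ite_eq]
      _ = σ a * U i (Fin.castLE hk1 a) := by
          rw [Finset.sum_eq_single (Fin.castLE hk1 a)]
          · simp [hD]; ring
          · intro r _ hr
            rw [hD]
            have hne : ¬ ((r : ℕ) = (a : ℕ)) := by
              intro h
              exact hr (by apply Fin.ext; simp [h])
            simp [hne]
          · intro h; exact absurd (Finset.mem_univ _) h
  -- matrix-level consequences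
  have hA : ∀ w : Fin m, Ukᵀ * Xv w = Sk * (Vb w)ᵀ := by
    intro w
    ext a q
    rw [Matrix.mul_apply]
    have h1 : ∀ j, Ukᵀ a j * Xv w j q = U j (Fin.castLE hk1 a) * X j ⟨w, q⟩ := by
      intro j
      rw [hX]
      simp [hUk]
    rw [Finset.sum_congr rfl fun j _ => h1 j, key1]
    simp [hSk, Matrix.diagonal_mul, hVb]
  have hA' : ∀ w : Fin m, (Xv w)ᵀ * Uk = Vb w * Sk := by
    intro w
    have := congrArg Matrix.transpose (hA w)
    simpa [Matrix.transpose_mul, Matrix.diagonal_transpose, hSk] using this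
  have hSum : (∑ w, Xv w * Vb w) = Uk * Sk := by
    ext i a
    rw [Matrix.sum_apply]
    have h1 : ∀ w, (Xv w * Vb w) i a = ∑ q, X i ⟨w, q⟩ * V ⟨w, q⟩ (Fin.castLE hk2 a) := by
      intro w
      rw [Matrix.mul_apply]
      refine Finset.sum_congr rfl fun q _ => ?_
      rw [hX, hVb]
      simp
    rw [Finset.sum_congr rfl fun w _ => h1 w]
    rw [Finset.sum_sigma' Finset.univ (fun _ => Finset.univ)
      (fun w q => X i ⟨w, q⟩ * V ⟨w, q⟩ (Fin.castLE hk2 a)), Finset.univ_sigma_univ]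
    show (∑ s, X i s * V s (Fin.castLE hk2 a)) = _
    rw [key2]
    simp [hSk, Matrix.mul_diagonal, hUk, mul_comm]
  -- LHS trace
  have hQtr : ∀ B : Matrix (Fin k) (Fin k) ℝ, (Qᵀ * B * Q).trace = B.trace := by
    intro B
    rw [Matrix.trace_mul_cycle, hQ', Matrix.one_mul]
  have hLHS : (Hᵀ * (Xv v * (Xv v)ᵀ) * H).trace
      = ((Vb v)ᵀ * Vb v * (Sk * Sk)).trace := by
    rw [hH]
    have : (Uk * Q)ᵀ * (Xv v * (Xv v)ᵀ) * (Uk * Q)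
        = Qᵀ * ((Ukᵀ * Xv v) * ((Xv v)ᵀ * Uk)) * Q := by
      simp only [Matrix.transpose_mul, Matrix.mul_assoc]
    rw [this, hQtr, hA, hA']
    calc (Sk * (Vb v)ᵀ * (Vb v * Sk)).trace
        = (Sk * ((Vb v)ᵀ * Vb v * Sk)).trace := by rw [Matrix.mul_assoc, Matrix.mul_assoc]
      _ = ((Vb v)ᵀ * Vb v * Sk * Sk).trace := by rw [Matrix.trace_mul_comm]
      _ = ((Vb v)ᵀ * Vb v * (Sk * Sk)).trace := by rw [Matrix.mul_assoc]
  -- RHS trace sum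
  have hRHS : (((Vb v)ᵀ * (Xv v)ᵀ * Xv v * Vb v).trace +
      ∑ w ∈ Finset.univ.erase v, ((Vb v)ᵀ * (Xv v)ᵀ * Xv w * Vb w).trace)
      = ((Vb v)ᵀ * Vb v * (Sk * Sk)).trace := by
    rw [Finset.add_sum_erase Finset.univ (fun w => ((Vb v)ᵀ * (Xv v)ᵀ * Xv w * Vb w).trace) (Finset.mem_univ v)]
    have h1 : ∀ w, ((Vb v)ᵀ * (Xv v)ᵀ * Xv w * Vb w).trace
        = (((Vb v)ᵀ * (Xv v)ᵀ) * (Xv w * Vb w)).trace := by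
      intro w; congr 1; simp only [Matrix.mul_assoc]
    rw [Finset.sum_congr rfl fun w _ => h1 w, ← Matrix.trace_sum, ← Matrix.mul_sum, hSum]
    have : (Vb v)ᵀ * (Xv v)ᵀ * (Uk * Sk) = (Vb v)ᵀ * ((Xv v)ᵀ * Uk) * Sk := by
      simp only [Matrix.mul_assoc]
    rw [this, hA']
    congr 1
    simp only [Matrix.mul_assoc]
  rw [hLHS, hRHS]
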